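/- arXiv:1406.0018 — 2 statements merged into one kernel-verified Lean document; each statement's English description precedes it below -/
import Mathlib

section
/- Let g : ℝ³ → Matrix (Fin 3) (Fin 3) ℝ be a smooth map taking values in invertible symmetric 3×3 matrices, with inverse entries denoted g^{js}, and let φ : ℝ³ → ℝ be smooth and everywhere positive. Define the covector field ω(g) with components ω(g)_k = 2 ∑_j g_{kj} ∑_s ∂_{x^s}(g^{js}) + ∂_{x^k}(ln |det g|), where (x¹,x²,x³) are the standard coordinates on ℝ³. Then the covector associated to the conformally rescaled matrix field φ²g satisfies ω(φ²g)_k = ω(g)_k + 2 ∂_{x^k}(ln φ) for all k and at every point of ℝ³. -/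
noncomputable section

/-- Partial derivative of `f` along the `i`-th coordinate direction on `ℝⁿ`. -/
def pd {n : ℕ} (i : Fin n) (f : (Fin n → ℝ) → ℝ) : (Fin n → ℝ) → ℝ :=
  fun x => fderiv ℝ f x (Pi.single i 1)

/-- Formula (omega) of the paper:
`ω(g)_k = 2 ∑_j g_{kj} ∑_s ∂_{x^s}(g^{js}) + ∂_{x^k}(ln |det g|)`,
where `g^{js}` are the entries of the pointwise inverse matrix. -/
def omegaEW (g : (Fin 3 → ℝ) → Matrix (Fin 3) (Fin 3) ℝ) (k : Fin 3) :
    (Fin 3 → ℝ) → ℝ :=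
  fun x =>
    2 * ∑ j : Fin 3, g x k j * (∑ s : Fin 3, pd s (fun y => (g y)⁻¹ j s) x)
      + pd k (fun y => Real.log |(g y).det|) x

lemma pd_add' {n} {f h : (Fin n → ℝ) → ℝ} {x} (hf : DifferentiableAt ℝ f x)
    (hh : DifferentiableAt ℝ h x) (i : Fin n) :
    pd i (fun y => f y + h y) x = pd i f x + pd i h x := by
  simp [pd, fderiv_fun_add hf hh]

lemma pd_mul' {n} {f h : (Fin n → ℝ) → ℝ} {x} (hf : DifferentiableAt ℝ f x)
    (hh : DifferentiableAt ℝ h x) (i : Fin n) :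
    pd i (fun y => f y * h y) x = pd i f x * h x + f x * pd i h x := by
  simp [pd, fderiv_fun_mul hf hh]; ring

lemma pd_const_mul' {n} {f : (Fin n → ℝ) → ℝ} {x} (hf : DifferentiableAt ℝ f x)
    (c : ℝ) (i : Fin n) :
    pd i (fun y => c * f y) x = c * pd i f x := by
  simp [pd, fderiv_const_mul hf c]

lemma pd_const' {n} (c : ℝ) (i : Fin n) (x : Fin n → ℝ) :
    pd i (fun _ => c) x = 0 := by
  simp [pd]

lemma pd_log' {n} {f : (Fin n → ℝ) → ℝ} {x} (hf : DifferentiableAt ℝ f x)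
    (hx : f x ≠ 0) (i : Fin n) :
    pd i (fun y => Real.log (f y)) x = (f x)⁻¹ * pd i f x := by
  simp [pd, (hf.hasFDerivAt.log hx).fderiv]

/-- Gauge covariance of the covector `ω` under conformal rescaling `g → φ²g`:
`ω(φ²g)_k = ω(g)_k + 2 ∂_{x^k}(ln φ)`. -/
theorem omega_conformal_gauge
    (g : (Fin 3 → ℝ) → Matrix (Fin 3) (Fin 3) ℝ)
    (φ : (Fin 3 → ℝ) → ℝ)
    (hg : ∀ i j : Fin 3, ContDiff ℝ (⊤ : ℕ∞) fun x => g x i j)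
    (hsymm : ∀ x, (g x).IsSymm)
    (hdet : ∀ x, (g x).det ≠ 0)
    (hφ : ContDiff ℝ (⊤ : ℕ∞) φ)
    (hφpos : ∀ x, 0 < φ x) :
    ∀ (k : Fin 3) (x : Fin 3 → ℝ),
      omegaEW (fun y => (φ y) ^ 2 • g y) k x
        = omegaEW g k x + 2 * pd k (fun y => Real.log (φ y)) x := by
  -- smoothness of the determinant
  have hdetC : ContDiff ℝ (⊤ : ℕ∞) fun y => (g y).det := by
    have h : (fun y => (g y).det) = fun y =>
        g y 0 0 * g y 1 1 * g y 2 2 - g y 0 0 * g y 1 2 * g y 2 1 -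
          g y 0 1 * g y 1 0 * g y 2 2 + g y 0 1 * g y 1 2 * g y 2 0 +
          g y 0 2 * g y 1 0 * g y 2 1 - g y 0 2 * g y 1 1 * g y 2 0 :=
      funext fun y => Matrix.det_fin_three (g y)
    rw [h]
    exact (((((((hg 0 0).mul (hg 1 1)).mul (hg 2 2)).sub
      (((hg 0 0).mul (hg 1 2)).mul (hg 2 1))).sub
      (((hg 0 1).mul (hg 1 0)).mul (hg 2 2))).add
      (((hg 0 1).mul (hg 1 2)).mul (hg 2 0))).add
      (((hg 0 2).mul (hg 1 0)).mul (hg 2 1))).sub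
      (((hg 0 2).mul (hg 1 1)).mul (hg 2 0))
  -- smoothness of the entries of the pointwise inverse
  have hainv : ∀ j s : Fin 3, ContDiff ℝ (⊤ : ℕ∞) fun y => (g y)⁻¹ j s := by
    intro j s
    have h1 : (fun y => (g y)⁻¹ j s)
        = fun y => ((g y).det)⁻¹ * (g y).adjugate j s := by
      funext y
      rw [Matrix.inv_def, Ring.inverse_eq_inv, Matrix.smul_apply, smul_eq_mul]
    rw [h1]
    refine (hdetC.inv hdet).mul ?_
    fin_cases j <;> fin_cases s <;>
      simp only [Matrix.adjugate_fin_three, Matrix.cons_val', Matrix.cons_val_zero,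
        Matrix.cons_val_one, Matrix.head_cons, Matrix.empty_val', Matrix.cons_val_fin_one,
        Matrix.head_fin_const, Fin.isValue] <;>
      first
        | exact ((hg _ _).mul (hg _ _)).sub ((hg _ _).mul (hg _ _))
        | exact (((hg _ _).mul (hg _ _)).neg).add ((hg _ _).mul (hg _ _))
  -- rewriting the inverse of the rescaled matrix
  have hinv_rw : ∀ j s : Fin 3, (fun y => ((φ y) ^ 2 • g y)⁻¹ j s)
      = fun y => ((φ y) ^ 2)⁻¹ * (g y)⁻¹ j s := by
    intro j s; funext y
    have h1 : ((φ y) ^ 2 • g y) * (((φ y) ^ 2)⁻¹ • (g y)⁻¹) = 1 := by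
      rw [Matrix.smul_mul, Matrix.mul_smul, smul_smul,
        mul_inv_cancel₀ (pow_ne_zero 2 (hφpos y).ne'),
        Matrix.mul_nonsing_inv _ (Ne.isUnit (hdet y)), one_smul]
    rw [Matrix.inv_eq_right_inv h1, Matrix.smul_apply, smul_eq_mul]
  -- rewriting the log-determinant of the rescaled matrix
  have hdet_rw : (fun y => Real.log |((φ y) ^ 2 • g y).det|)
      = fun y => 6 * Real.log (φ y) + Real.log ((g y).det) := by
    funext y
    rw [Real.log_abs, Matrix.det_smul]
    have h2 : ((φ y) ^ 2) ^ (Fintype.card (Fin 3)) * (g y).det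
        = (φ y) ^ 6 * (g y).det := by
      simp only [Fintype.card_fin]; ring
    rw [h2, Real.log_mul (pow_ne_zero 6 (hφpos y).ne') (hdet y), Real.log_pow]
    norm_num
  have habs : (fun y => Real.log |(g y).det|) = fun y => Real.log ((g y).det) :=
    funext fun y => Real.log_abs _
  intro k x
  -- differentiability facts at x
  have hφx : φ x ≠ 0 := (hφpos x).ne'
  have hφ2x : (φ x) ^ 2 ≠ 0 := pow_ne_zero 2 hφx
  have dφ : DifferentiableAt ℝ φ x := (hφ.differentiable (by simp)) x
  have dφ2 : DifferentiableAt ℝ (fun y => (φ y) ^ 2) x := dφ.pow 2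
  have du : DifferentiableAt ℝ (fun y => ((φ y) ^ 2)⁻¹) x := dφ2.inv hφ2x
  have da : ∀ j s : Fin 3, DifferentiableAt ℝ (fun y => (g y)⁻¹ j s) x :=
    fun j s => ((hainv j s).differentiable (by simp)) x
  have ddet : DifferentiableAt ℝ (fun y => (g y).det) x := (hdetC.differentiable (by simp)) x
  have dlogdet : DifferentiableAt ℝ (fun y => Real.log ((g y).det)) x := ddet.log (hdet x)
  have dlogφ : DifferentiableAt ℝ (fun y => Real.log (φ y)) x := dφ.log hφx
  -- derivative of φ², and of (φ²)⁻¹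
  have hsq : ∀ s : Fin 3, pd s (fun y => (φ y) ^ 2) x = 2 * φ x * pd s φ x := by
    intro s
    have h : (fun y => (φ y) ^ 2) = fun y => φ y * φ y := by funext y; ring
    rw [h, pd_mul' dφ dφ]; ring
  have hu : ∀ s : Fin 3, pd s (fun y => ((φ y) ^ 2)⁻¹) x
      = -(((φ x) ^ 2)⁻¹ * (((φ x) ^ 2)⁻¹ * (2 * φ x * pd s φ x))) := by
    intro s
    have h1 : (fun _ : Fin 3 → ℝ => (1 : ℝ)) = fun y => ((φ y) ^ 2)⁻¹ * (φ y) ^ 2 := by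
      funext y; rw [inv_mul_cancel₀ (pow_ne_zero 2 (hφpos y).ne')]
    have h2 := pd_const' (n := 3) 1 s x
    rw [h1, pd_mul' du dφ2, hsq s] at h2
    have hne : φ x ≠ 0 := hφx
    field_simp at h2 ⊢
    linarith
  -- the delta identity ∑_j g_{kj} (g⁻¹)_{js} = δ_{ks}
  have key : ∀ s : Fin 3, ∑ j : Fin 3, g x k j * (g x)⁻¹ j s
      = if k = s then 1 else 0 := by
    intro s
    have h := Matrix.mul_nonsing_inv (g x) (Ne.isUnit (hdet x))
    have h2 := congrFun (congrFun h k) s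
    simpa [Matrix.mul_apply, Matrix.one_apply] using h2
  -- expand the sum over s for each j
  have sum_eq : ∀ j : Fin 3, (∑ s : Fin 3, pd s (fun y => ((φ y) ^ 2 • g y)⁻¹ j s) x)
      = (∑ s : Fin 3, pd s (fun y => ((φ y) ^ 2)⁻¹) x * (g x)⁻¹ j s)
        + ((φ x) ^ 2)⁻¹ * ∑ s : Fin 3, pd s (fun y => (g y)⁻¹ j s) x := by
    intro j
    calc ∑ s : Fin 3, pd s (fun y => ((φ y) ^ 2 • g y)⁻¹ j s) x
        = ∑ s : Fin 3, (pd s (fun y => ((φ y) ^ 2)⁻¹) x * (g x)⁻¹ j s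
            + ((φ x) ^ 2)⁻¹ * pd s (fun y => (g y)⁻¹ j s) x) := by
          refine Finset.sum_congr rfl fun s _ => ?_
          rw [hinv_rw j s, pd_mul' du (da j s)]
      _ = _ := by rw [Finset.sum_add_distrib, ← Finset.mul_sum]
  -- collapse the double sum using the delta identity
  have term1 : ∑ j : Fin 3, g x k j *
        ∑ s : Fin 3, pd s (fun y => ((φ y) ^ 2)⁻¹) x * (g x)⁻¹ j s
      = pd k (fun y => ((φ y) ^ 2)⁻¹) x := by
    have swap : ∑ j : Fin 3, g x k j *
          ∑ s : Fin 3, pd s (fun y => ((φ y) ^ 2)⁻¹) x * (g x)⁻¹ j s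
        = ∑ s : Fin 3, pd s (fun y => ((φ y) ^ 2)⁻¹) x *
            ∑ j : Fin 3, g x k j * (g x)⁻¹ j s := by
      simp_rw [Finset.mul_sum]
      rw [Finset.sum_comm]
      refine Finset.sum_congr rfl fun s _ => Finset.sum_congr rfl fun j _ => by ring
    rw [swap]
    calc ∑ s : Fin 3, pd s (fun y => ((φ y) ^ 2)⁻¹) x *
            ∑ j : Fin 3, g x k j * (g x)⁻¹ j s
        = ∑ s : Fin 3, pd s (fun y => ((φ y) ^ 2)⁻¹) x * (if k = s then 1 else 0) := by
          refine Finset.sum_congr rfl fun s _ => ?_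
          rw [key s]
      _ = pd k (fun y => ((φ y) ^ 2)⁻¹) x := by simp
  -- derivative of the log-determinant term
  have hdetpd : pd k (fun y => 6 * Real.log (φ y) + Real.log ((g y).det)) x
      = 6 * ((φ x)⁻¹ * pd k φ x) + pd k (fun y => Real.log ((g y).det)) x := by
    rw [pd_add' (dlogφ.const_mul 6) dlogdet, pd_const_mul' dlogφ, pd_log' dφ hφx]
  -- now assemble everything
  simp only [omegaEW, Matrix.smul_apply, smul_eq_mul]
  rw [hdet_rw, habs, hdetpd, pd_log' dφ hφx]
  have expand : ∑ j : Fin 3, (φ x) ^ 2 * g x k j *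
        (∑ s : Fin 3, pd s (fun y => ((φ y) ^ 2 • g y)⁻¹ j s) x)
      = (φ x) ^ 2 * (∑ j : Fin 3, g x k j *
            ∑ s : Fin 3, pd s (fun y => ((φ y) ^ 2)⁻¹) x * (g x)⁻¹ j s)
        + ∑ j : Fin 3, g x k j * ∑ s : Fin 3, pd s (fun y => (g y)⁻¹ j s) x := by
    calc ∑ j : Fin 3, (φ x) ^ 2 * g x k j *
          (∑ s : Fin 3, pd s (fun y => ((φ y) ^ 2 • g y)⁻¹ j s) x)
        = ∑ j : Fin 3, ((φ x) ^ 2 * (g x k j *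
              ∑ s : Fin 3, pd s (fun y => ((φ y) ^ 2)⁻¹) x * (g x)⁻¹ j s)
            + g x k j * ∑ s : Fin 3, pd s (fun y => (g y)⁻¹ j s) x) := by
          refine Finset.sum_congr rfl fun j _ => ?_
          rw [sum_eq j]
          field_simp
      _ = _ := by rw [Finset.sum_add_distrib, ← Finset.mul_sum]
  rw [expand, term1, hu k]
  field_simp
  ring
end
end

section
/- Let p, q, r : ℝ⁴ → ℝ be smooth functions of (w, z, x, y) satisfying p_{xx} + 2q_{xy} + r_{yy} = 0 at every point. Then there exist smooth functions F, G : ℝ⁴ → ℝ such that p = F_y, q = −(F_x + G_y)/2, and r = G_x everywhere. -/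
noncomputable section

open MeasureTheory intervalIntegral Metric ContinuousLinearMap Asymptotics Set

namespace SD1
abbrev V : Type := Fin 4 → ℝ
def ee (i : Fin 4) : V := Pi.single i 1
def pr (i : Fin 4) : V →L[ℝ] V :=
  ContinuousLinearMap.id ℝ V - (ContinuousLinearMap.proj i).smulRight (ee i)
lemma pr_apply (i : Fin 4) (v : V) : pr i v = v - v i • ee i := rfl
lemma pr_add_smul (i : Fin 4) (v : V) : pr i v + v i • ee i = v := by
  rw [pr_apply, sub_add_cancel]
def P (i : Fin 4) {E : Type} [NormedAddCommGroup E] [NormedSpace ℝ E] (f : V → E) : V → E :=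
  fun v => ∫ t in (0:ℝ)..(v i), f (pr i v + t • ee i)

variable {E : Type} [NormedAddCommGroup E] [NormedSpace ℝ E]

lemma cont_aux {f : V → E} (hf : Continuous f) (i : Fin 4) :
    Continuous fun p : V × ℝ => f (pr i p.1 + p.2 • ee i) :=
  hf.comp (((pr i).continuous.comp continuous_fst).add (continuous_snd.smul continuous_const))

lemma cont_slice {f : V → E} (hf : Continuous f) (i : Fin 4) (v : V) :
    Continuous fun t : ℝ => f (pr i v + t • ee i) :=
  (cont_aux hf i).comp (Continuous.prodMk_right v)

lemma intInt {f : V → E} (hf : Continuous f) (i : Fin 4) (v : V) (a b : ℝ) :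
    IntervalIntegrable (fun t => f (pr i v + t • ee i)) volume a b :=
  ((cont_slice hf i v)).intervalIntegrable a b

theorem hasFDerivAt_P [CompleteSpace E] {f : V → E} (hf : ContDiff ℝ 1 f) (i : Fin 4) (v₀ : V) :
    HasFDerivAt (P i f)
      ((ContinuousLinearMap.proj i : V →L[ℝ] ℝ).smulRight (f v₀)
        + P i (fun w => (fderiv ℝ f w).comp (pr i)) v₀) v₀ := by
  have hfd : Differentiable ℝ f := hf.differentiable one_ne_zero
  have hfc : Continuous f := hfd.continuous
  have hf' : Continuous (fderiv ℝ f) := hf.continuous_fderiv one_ne_zero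
  set g₂ : V → E := fun v => ∫ t in (0:ℝ)..(v₀ i), f (pr i v + t • ee i) with hg₂
  set g₁ : V → E := fun v => ∫ t in (v₀ i)..(v i), f (pr i v + t • ee i) with hg₁
  have hsplit : P i f = fun v => g₂ v + g₁ v := by
    funext v
    exact (integral_add_adjacent_intervals (intInt hfc i v 0 (v₀ i))
      (intInt hfc i v (v₀ i) (v i))).symm
  -- Step A : derivative of g₂ (differentiation under the integral sign)
  have hA : HasFDerivAt g₂ (P i (fun w => (fderiv ℝ f w).comp (pr i)) v₀) v₀ := by
    -- compact set and bound
    obtain ⟨C₀, hC₀⟩ : ∃ C, ∀ x ∈ (fun p : V × ℝ => pr i p.1 + p.2 • ee i) ''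
        (closedBall v₀ 1 ×ˢ uIcc (0:ℝ) (v₀ i)), ‖fderiv ℝ f x‖ ≤ C :=
      ((isCompact_closedBall v₀ 1).prod isCompact_uIcc).image
        (cont_aux continuous_id i) |>.exists_bound_of_continuousOn hf'.continuousOn
    set C : NNReal := Real.toNNReal C₀ * ‖pr i‖₊ with hC
    haveI : SecondCountableTopologyEither ℝ (V →L[ℝ] E) :=
      secondCountableTopologyEither_of_left ℝ _
    have key := intervalIntegral.hasFDerivAt_integral_of_dominated_loc_of_lip
      (F := fun v t => f (pr i v + t • ee i))
      (F' := fun t => (fderiv ℝ f (pr i v₀ + t • ee i)).comp (pr i))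
      (x₀ := v₀) (a := (0:ℝ)) (b := v₀ i) (μ := volume) (bound := fun _ => (C : ℝ))
      (ball_mem_nhds v₀ one_pos)
      (Filter.Eventually.of_forall fun v => (cont_slice hfc i v).aestronglyMeasurable)
      (intInt hfc i v₀ 0 (v₀ i))
      ((Continuous.clm_comp (hf'.comp (cont_slice continuous_id i v₀))
        continuous_const).aestronglyMeasurable)
      ?lip (intervalIntegrable_const) ?diff
    · exact key.2
    case diff =>
      refine Filter.Eventually.of_forall fun t _ => ?_
      have h1 : HasFDerivAt (fun v : V => pr i v + t • ee i) (pr i) v₀ :=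
        ((pr i).hasFDerivAt).add_const _
      exact ((hfd _).hasFDerivAt).comp v₀ h1
    case lip =>
      refine Filter.Eventually.of_forall fun t ht => ?_
      have hCc : Real.nnabs (C : ℝ) = C := by
        simp
      rw [hCc]
      refine (convex_ball v₀ 1).lipschitzOnWith_of_nnnorm_hasFDerivWithin_le
        (f' := fun x => (fderiv ℝ f (pr i x + t • ee i)).comp (pr i))
        (fun x _ => ?_) (fun x hx => ?_)
      · have h1 : HasFDerivAt (fun v : V => pr i v + t • ee i) (pr i) x :=
          ((pr i).hasFDerivAt).add_const _
        exact (((hfd _).hasFDerivAt).comp x h1).hasFDerivWithinAt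
      · refine le_trans (opNNNorm_comp_le _ _) ?_
        refine mul_le_mul_of_nonneg_right ?_ (zero_le (α := NNReal))
        have hmem : pr i x + t • ee i ∈ (fun p : V × ℝ => pr i p.1 + p.2 • ee i) ''
            (closedBall v₀ 1 ×ˢ uIcc (0:ℝ) (v₀ i)) :=
          ⟨(x, t), ⟨ball_subset_closedBall hx, uIoc_subset_uIcc ht⟩, rfl⟩
        have := hC₀ _ hmem
        rw [← NNReal.coe_le_coe]
        exact le_trans this (Real.le_coe_toNNReal C₀)
  -- Step B : derivative of g₁ (endpoint differentiation)
  have hB : HasFDerivAt g₁ ((ContinuousLinearMap.proj i : V →L[ℝ] ℝ).smulRight (f v₀)) v₀ := by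
    refine HasFDerivAt.of_isLittleO ?_
    rw [isLittleO_iff]
    intro c hc
    have hcont : ContinuousAt (fun p : V × ℝ => f (pr i p.1 + p.2 • ee i)) (v₀, v₀ i) :=
      (cont_aux hfc i).continuousAt
    rw [Metric.continuousAt_iff] at hcont
    obtain ⟨δ, hδ, hball⟩ := hcont c hc
    refine Metric.eventually_nhds_iff.2 ⟨δ, hδ, fun v hv => ?_⟩
    have hvi : |v i - v₀ i| ≤ dist v v₀ := by
      have h1 := norm_le_pi_norm (v - v₀) i
      simpa [dist_eq_norm, Real.norm_eq_abs] using h1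
    have hbound : ∀ t ∈ Set.uIoc (v₀ i) (v i), ‖f (pr i v + t • ee i) - f v₀‖ ≤ c := by
      intro t ht
      have htd : |t - v₀ i| ≤ |v i - v₀ i| := by
        rcases Set.mem_uIoc.mp ht with h | h <;> rw [abs_sub_le_iff] <;> constructor <;>
        · have h1 := le_abs_self (v i - v₀ i)
          have h2 := neg_abs_le (v i - v₀ i)
          have h3 := h.1
          have h4 := h.2
          linarith
      have hdp : dist (v, t) (v₀, v₀ i) < δ := by
        rw [Prod.dist_eq]
        refine max_lt hv ?_
        rw [Real.dist_eq]
        exact lt_of_le_of_lt (le_trans htd hvi) hv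
      have := hball hdp
      rw [dist_eq_norm] at this
      have hrw : pr i v₀ + v₀ i • ee i = v₀ := pr_add_smul i v₀
      rw [hrw] at this
      exact le_of_lt this
    have heq : g₁ v - g₁ v₀
        - ((ContinuousLinearMap.proj i : V →L[ℝ] ℝ).smulRight (f v₀)) (v - v₀)
        = ∫ t in (v₀ i)..(v i), (f (pr i v + t • ee i) - f v₀) := by
      rw [intervalIntegral.integral_sub (intInt hfc i v _ _) intervalIntegrable_const,
        intervalIntegral.integral_const]
      simp only [hg₁, intervalIntegral.integral_same, sub_zero,
        ContinuousLinearMap.smulRight_apply, ContinuousLinearMap.proj_apply, Pi.sub_apply]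
    rw [heq]
    calc ‖∫ t in (v₀ i)..(v i), (f (pr i v + t • ee i) - f v₀)‖
        ≤ c * |v i - v₀ i| := intervalIntegral.norm_integral_le_of_norm_le_const hbound
      _ ≤ c * ‖v - v₀‖ := by
          have : |v i - v₀ i| ≤ ‖v - v₀‖ := by rwa [dist_eq_norm] at hvi
          exact mul_le_mul_of_nonneg_left this (le_of_lt hc)
  rw [hsplit]
  have h2 := hB.add hA
  exact h2.congr_of_eventuallyEq (Filter.Eventually.of_forall fun v => add_comm (g₂ v) (g₁ v))

lemma of_top {f : V → E} (hf : ContDiff ℝ (⊤:ℕ∞) f) (n : ℕ∞) : ContDiff ℝ n f :=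
  hf.of_le (by exact_mod_cast le_top)

theorem fderiv_P [CompleteSpace E] {f : V → E} (hf : ContDiff ℝ 1 f) (i : Fin 4) :
    fderiv ℝ (P i f) = fun v => (ContinuousLinearMap.proj i : V →L[ℝ] ℝ).smulRight (f v)
      + P i (fun w => (fderiv ℝ f w).comp (pr i)) v :=
  funext fun v => (hasFDerivAt_P hf i v).fderiv

theorem contDiff_P (i : Fin 4) : ∀ (n : ℕ) {E : Type} [NormedAddCommGroup E]
    [NormedSpace ℝ E] [CompleteSpace E] (f : V → E),
    ContDiff ℝ (⊤:ℕ∞) f → ContDiff ℝ (n:ℕ∞) (P i f) := by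
  intro n
  induction n with
  | zero =>
    intro E _ _ _ f hf
    have : Differentiable ℝ (P i f) := fun v => (hasFDerivAt_P (of_top hf 1) i v).differentiableAt
    exact_mod_cast contDiff_zero.2 this.continuous
  | succ n ih =>
    intro E _ _ _ f hf
    have hcast : ((((n:ℕ)+1 : ℕ) : ℕ∞) : WithTop ℕ∞) = ((n:ℕ∞) : WithTop ℕ∞) + 1 := by
      push_cast; rfl
    rw [hcast, contDiff_succ_iff_fderiv]
    refine ⟨fun v => (hasFDerivAt_P (of_top hf 1) i v).differentiableAt, by simp, ?_⟩
    rw [fderiv_P (of_top hf 1) i]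
    have hA : ContDiff ℝ (n:ℕ∞) fun v =>
        (ContinuousLinearMap.proj i : V →L[ℝ] ℝ).smulRight (f v) :=
      ((ContinuousLinearMap.smulRightL ℝ V E (ContinuousLinearMap.proj i)).contDiff).comp
        (of_top hf n)
    have hg : ContDiff ℝ (⊤:ℕ∞) fun w => (fderiv ℝ f w).comp (pr i) := by
      refine ContDiff.clm_comp ?_ contDiff_const
      exact hf.fderiv_right (m := (⊤:ℕ∞)) (by exact_mod_cast le_top)
    exact hA.add (ih _ hg)

lemma contDiff_P_top (i : Fin 4) {E : Type} [NormedAddCommGroup E]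
    [NormedSpace ℝ E] [CompleteSpace E] {f : V → E} (hf : ContDiff ℝ (⊤:ℕ∞) f) :
    ContDiff ℝ (⊤:ℕ∞) (P i f) := by
  have : ∀ n : ℕ, ContDiff ℝ (n : ℕ∞) (P i f) := fun n => contDiff_P i n f hf
  exact_mod_cast contDiff_infty.2 (by exact_mod_cast this)

lemma pd_eq {j : Fin 4} {f : V → ℝ} (v : V) : pd j f v = fderiv ℝ f v (ee j) := rfl

lemma contDiff_pd {f : V → ℝ} (hf : ContDiff ℝ (⊤:ℕ∞) f) (j : Fin 4) :
    ContDiff ℝ (⊤:ℕ∞) (pd j f) :=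
  ContDiff.clm_apply (hf.fderiv_right (m := (⊤:ℕ∞)) (by exact_mod_cast le_top)) contDiff_const

lemma P_CLM_apply {f : V → ℝ} (hf : ContDiff ℝ (⊤:ℕ∞) f) (i : Fin 4) (v x : V) :
    (P i (fun w => (fderiv ℝ f w).comp (pr i)) v) x
      = ∫ t in (0:ℝ)..(v i), fderiv ℝ f (pr i v + t • ee i) (pr i x) := by
  have hcont : Continuous fun w => (fderiv ℝ f w).comp (pr i) :=
    Continuous.clm_comp (hf.continuous_fderiv (by simp)) continuous_const
  rw [show (P i (fun w => (fderiv ℝ f w).comp (pr i)) v)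
      = ∫ t in (0:ℝ)..(v i), (fderiv ℝ f (pr i v + t • ee i)).comp (pr i) from rfl,
    ContinuousLinearMap.intervalIntegral_apply (intInt hcont i v 0 (v i))]
  rfl

lemma pd_P_self {f : V → ℝ} (hf : ContDiff ℝ (⊤:ℕ∞) f) (i : Fin 4) (v : V) :
    pd i (P i f) v = f v := by
  rw [pd_eq, (hasFDerivAt_P (of_top hf 1) i v).fderiv]
  rw [ContinuousLinearMap.add_apply, ContinuousLinearMap.smulRight_apply,
    ContinuousLinearMap.proj_apply, P_CLM_apply hf]
  have h1 : (ee i) i = 1 := Pi.single_eq_same i 1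
  have h2 : pr i (ee i) = 0 := by
    rw [pr_apply]; simp [ee]
  rw [h1, h2]
  simp

lemma pd_P_ne {f : V → ℝ} (hf : ContDiff ℝ (⊤:ℕ∞) f) {i j : Fin 4} (hij : j ≠ i) (v : V) :
    pd j (P i f) v = P i (pd j f) v := by
  rw [pd_eq, (hasFDerivAt_P (of_top hf 1) i v).fderiv]
  rw [ContinuousLinearMap.add_apply, ContinuousLinearMap.smulRight_apply,
    ContinuousLinearMap.proj_apply, P_CLM_apply hf]
  have h1 : (ee j) i = 0 := Pi.single_eq_of_ne (Ne.symm hij) 1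
  have h2 : pr i (ee j) = ee j := by
    rw [pr_apply, h1, zero_smul, sub_zero]
  rw [h1, h2, zero_smul, zero_add]
  rfl

lemma P_pd_self {f : V → ℝ} (hf : ContDiff ℝ (⊤:ℕ∞) f) (i : Fin 4) (v : V) :
    P i (pd i f) v = f v - f (pr i v) := by
  have key : ∀ t : ℝ, HasDerivAt (fun s => f (pr i v + s • ee i))
      (pd i f (pr i v + t • ee i)) t := by
    intro t
    have inner : HasDerivAt (fun s : ℝ => pr i v + s • ee i) (ee i) t := by
      simpa using ((hasDerivAt_id t).smul_const (ee i)).const_add (pr i v)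
    exact ((hf.differentiable (by simp)) _).hasFDerivAt.comp_hasDerivAt t inner
  have := intervalIntegral.integral_eq_sub_of_hasDerivAt (f' := fun t =>
      pd i f (pr i v + t • ee i)) (a := (0:ℝ)) (b := v i)
    (fun t _ => key t) (intInt (contDiff_pd hf i).continuous i v 0 (v i))
  rw [show P i (pd i f) v = ∫ t in (0:ℝ)..(v i), pd i f (pr i v + t • ee i) from rfl, this,
    pr_add_smul]
  simp

lemma diffAt {f : V → ℝ} (hf : ContDiff ℝ (⊤:ℕ∞) f) (v : V) : DifferentiableAt ℝ f v :=
  (hf.differentiable (by simp)) v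

lemma pd_sub {f g : V → ℝ} {v : V} (hf : DifferentiableAt ℝ f v)
    (hg : DifferentiableAt ℝ g v) (j : Fin 4) :
    pd j (fun w => f w - g w) v = pd j f v - pd j g v := by
  show fderiv ℝ (fun w => f w - g w) v (Pi.single j 1) = _
  rw [fderiv_fun_sub hf hg]; rfl

lemma pd_add {f g : V → ℝ} {v : V} (hf : DifferentiableAt ℝ f v)
    (hg : DifferentiableAt ℝ g v) (j : Fin 4) :
    pd j (fun w => f w + g w) v = pd j f v + pd j g v := by
  show fderiv ℝ (fun w => f w + g w) v (Pi.single j 1) = _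
  rw [fderiv_fun_add hf hg]; rfl

lemma pd_neg {f : V → ℝ} {v : V} (j : Fin 4) :
    pd j (fun w => -(f w)) v = -(pd j f v) := by
  show fderiv ℝ (fun w => -(f w)) v (Pi.single j 1) = _
  rw [fderiv_fun_neg]; rfl

lemma pd_const_mul {f : V → ℝ} {v : V} (hf : DifferentiableAt ℝ f v) (c : ℝ) (j : Fin 4) :
    pd j (fun w => c * f w) v = c * pd j f v := by
  show fderiv ℝ (fun w => c * f w) v (Pi.single j 1) = _
  rw [fderiv_const_mul hf c]; rfl

lemma pd_comp_clm {f : V → ℝ} (L : V →L[ℝ] V) {v : V}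
    (hf : DifferentiableAt ℝ f (L v)) (j : Fin 4) :
    pd j (fun w => f (L w)) v = fderiv ℝ f (L v) (L (Pi.single j 1)) := by
  show fderiv ℝ (fun w => f (L w)) v (Pi.single j 1) = _
  have hc := (hf.hasFDerivAt.comp v L.hasFDerivAt)
  rw [show (fun w => f (L w)) = f ∘ ⇑L from rfl, hc.fderiv]
  rfl

lemma pr_apply_ne {i j : Fin 4} (h : j ≠ i) (v : V) : (pr i v) j = v j := by
  rw [pr_apply]
  simp [ee, Pi.single_eq_of_ne h]

lemma pr_ee_self (i : Fin 4) : pr i (ee i) = 0 := by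
  rw [pr_apply]; simp [ee]

lemma pr_ee_ne {i j : Fin 4} (h : j ≠ i) : pr i (ee j) = ee j := by
  rw [pr_apply]
  have : (ee j) i = 0 := Pi.single_eq_of_ne h.symm 1
  rw [this, zero_smul, sub_zero]

lemma pr_comm {i j : Fin 4} (h : i ≠ j) (v : V) : pr i (pr j v) = pr j (pr i v) := by
  have l1 : pr i (pr j v) = v - v j • ee j - v i • ee i := by
    rw [pr_apply i (pr j v), pr_apply_ne h v, pr_apply j v]
  have l2 : pr j (pr i v) = v - v i • ee i - v j • ee j := by
    rw [pr_apply j (pr i v), pr_apply_ne h.symm v, pr_apply i v]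
  rw [l1, l2]
  abel

lemma P_zero (i : Fin 4) (v : V) : P i (fun _ => (0:ℝ)) v = 0 := by
  simp [P]

lemma const_dir {g : V → ℝ} (hg : ContDiff ℝ (⊤:ℕ∞) g) (j : Fin 4)
    (h0 : ∀ v, pd j g v = 0) (v : V) : g v = g (pr j v) := by
  have h1 := P_pd_self hg j v
  have h2 : P j (pd j g) v = 0 := by
    have : (pd j g) = fun _ => (0:ℝ) := funext h0
    rw [this, P_zero]
  rw [h2] at h1
  linarith

variable (p q r : V → ℝ)

/-- The function whose decomposition provides the extra potentials. -/
def psi : V → ℝ := fun v => -(2 * q v) - P 3 (pd 2 p) v - P 2 (pd 3 r) v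

variable {p q r}

lemma psi_contDiff (hp : ContDiff ℝ (⊤:ℕ∞) p) (hq : ContDiff ℝ (⊤:ℕ∞) q)
    (hr : ContDiff ℝ (⊤:ℕ∞) r) : ContDiff ℝ (⊤:ℕ∞) (psi p q r) :=
  (((contDiff_const.mul hq).neg).sub (contDiff_P_top 3 (contDiff_pd hp 2))).sub
    (contDiff_P_top 2 (contDiff_pd hr 3))

lemma h32 : (3 : Fin 4) ≠ 2 := by decide
lemma h23 : (2 : Fin 4) ≠ 3 := by decide

lemma pd3_psi (hp : ContDiff ℝ (⊤:ℕ∞) p) (hq : ContDiff ℝ (⊤:ℕ∞) q)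
    (hr : ContDiff ℝ (⊤:ℕ∞) r) (v : V) :
    pd 3 (psi p q r) v = -(2 * pd 3 q v) - pd 2 p v - P 2 (pd 3 (pd 3 r)) v := by
  have d0 : DifferentiableAt ℝ (fun w => -(2 * q w)) v :=
    diffAt ((contDiff_const.mul hq).neg) v
  have dA : DifferentiableAt ℝ (P 3 (pd 2 p)) v :=
    diffAt (contDiff_P_top 3 (contDiff_pd hp 2)) v
  have dB : DifferentiableAt ℝ (P 2 (pd 3 r)) v :=
    diffAt (contDiff_P_top 2 (contDiff_pd hr 3)) v
  have e1 : pd 3 (psi p q r) v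
      = pd 3 (fun w => -(2 * q w) - P 3 (pd 2 p) w) v - pd 3 (P 2 (pd 3 r)) v :=
    pd_sub (d0.sub dA) dB 3
  have e2 : pd 3 (fun w => -(2 * q w) - P 3 (pd 2 p) w) v
      = pd 3 (fun w => -(2 * q w)) v - pd 3 (P 3 (pd 2 p)) v := pd_sub d0 dA 3
  have e3 : pd 3 (fun w => -(2 * q w)) v = -(2 * pd 3 q v) := by
    rw [pd_neg (f := fun w => 2 * q w), pd_const_mul (diffAt hq v) 2]
  rw [e1, e2, e3, pd_P_self (contDiff_pd hp 2) 3 v,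
    pd_P_ne (contDiff_pd hr 3) h32 v]

lemma pd2_pd3_psi (hp : ContDiff ℝ (⊤:ℕ∞) p) (hq : ContDiff ℝ (⊤:ℕ∞) q)
    (hr : ContDiff ℝ (⊤:ℕ∞) r)
    (h : ∀ x : V, pd 2 (pd 2 p) x + 2 * pd 2 (pd 3 q) x + pd 3 (pd 3 r) x = 0) (v : V) :
    pd 2 (pd 3 (psi p q r)) v = 0 := by
  have hfun : pd 3 (psi p q r)
      = fun w => -(2 * pd 3 q w) - pd 2 p w - P 2 (pd 3 (pd 3 r)) w :=
    funext (pd3_psi hp hq hr)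
  have d0 : DifferentiableAt ℝ (fun w => -(2 * pd 3 q w)) v :=
    diffAt ((contDiff_const.mul (contDiff_pd hq 3)).neg) v
  have dA : DifferentiableAt ℝ (pd 2 p) v := diffAt (contDiff_pd hp 2) v
  have dB : DifferentiableAt ℝ (P 2 (pd 3 (pd 3 r))) v :=
    diffAt (contDiff_P_top 2 (contDiff_pd (contDiff_pd hr 3) 3)) v
  rw [hfun]
  have e1 : pd 2 (fun w => -(2 * pd 3 q w) - pd 2 p w - P 2 (pd 3 (pd 3 r)) w) v
      = pd 2 (fun w => -(2 * pd 3 q w) - pd 2 p w) v - pd 2 (P 2 (pd 3 (pd 3 r))) v :=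
    pd_sub (d0.sub dA) dB 2
  have e2 : pd 2 (fun w => -(2 * pd 3 q w) - pd 2 p w) v
      = pd 2 (fun w => -(2 * pd 3 q w)) v - pd 2 (pd 2 p) v := pd_sub d0 dA 2
  have e3 : pd 2 (fun w => -(2 * pd 3 q w)) v = -(2 * pd 2 (pd 3 q) v) := by
    rw [pd_neg (f := fun w => 2 * pd 3 q w), pd_const_mul (diffAt (contDiff_pd hq 3) v) 2]
  rw [e1, e2, e3, pd_P_self (contDiff_pd (contDiff_pd hr 3) 3) 2 v]
  have := h v
  linarith

lemma psi_decomp (hp : ContDiff ℝ (⊤:ℕ∞) p) (hq : ContDiff ℝ (⊤:ℕ∞) q)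
    (hr : ContDiff ℝ (⊤:ℕ∞) r)
    (h : ∀ x : V, pd 2 (pd 2 p) x + 2 * pd 2 (pd 3 q) x + pd 3 (pd 3 r) x = 0) (v : V) :
    psi p q r v = psi p q r (pr 3 v)
      + (psi p q r (pr 2 v) - psi p q r (pr 2 (pr 3 v))) := by
  have hψ := psi_contDiff hp hq hr
  have hχ : ContDiff ℝ (⊤:ℕ∞) (pd 3 (psi p q r)) := contDiff_pd hψ 3
  have hconst : ∀ w, pd 3 (psi p q r) w = pd 3 (psi p q r) (pr 2 w) :=
    const_dir hχ 2 (pd2_pd3_psi hp hq hr h)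
  have h1 : P 3 (pd 3 (psi p q r)) v = psi p q r v - psi p q r (pr 3 v) :=
    P_pd_self hψ 3 v
  have h2 : P 3 (pd 3 (psi p q r)) (pr 2 v)
      = psi p q r (pr 2 v) - psi p q r (pr 3 (pr 2 v)) := P_pd_self hψ 3 (pr 2 v)
  have h3 : P 3 (pd 3 (psi p q r)) v = P 3 (pd 3 (psi p q r)) (pr 2 v) := by
    show (∫ t in (0:ℝ)..(v 3), pd 3 (psi p q r) (pr 3 v + t • ee 3))
      = ∫ t in (0:ℝ)..((pr 2 v) 3), pd 3 (psi p q r) (pr 3 (pr 2 v) + t • ee 3)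
    rw [pr_apply_ne h32 v]
    refine intervalIntegral.integral_congr fun t _ => ?_
    conv_rhs => rw [pr_comm h32 v, ← pr_ee_ne h32,
      show pr 2 (pr 3 v) + t • pr 2 (ee 3) = pr 2 (pr 3 v + t • ee 3) by
        rw [map_add, _root_.map_smul]]
    exact hconst _
  rw [pr_comm h23.symm v] at h2
  linarith

end SD1

open SD1

/-- Potentialization: if smooth `p, q, r` satisfy `p_{xx} + 2q_{xy} + r_{yy} = 0`
everywhere, then there exist smooth `F, G` such that `p = F_y`,
`q = −(F_x + G_y)/2` and `r = G_x`. -/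
theorem SD1_potentialization
    (p q r : (Fin 4 → ℝ) → ℝ)
    (hp : ContDiff ℝ (⊤ : ℕ∞) p)
    (hq : ContDiff ℝ (⊤ : ℕ∞) q)
    (hr : ContDiff ℝ (⊤ : ℕ∞) r)
    (h : ∀ x : Fin 4 → ℝ,
      pd 2 (pd 2 p) x + 2 * pd 2 (pd 3 q) x + pd 3 (pd 3 r) x = 0) :
    ∃ F G : (Fin 4 → ℝ) → ℝ,
      ContDiff ℝ (⊤ : ℕ∞) F ∧ ContDiff ℝ (⊤ : ℕ∞) G ∧
      ∀ x : Fin 4 → ℝ,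
        p x = pd 3 F x ∧
        q x = -(pd 2 F x + pd 3 G x) / 2 ∧
        r x = pd 2 G x := by
  have hψ : ContDiff ℝ (⊤:ℕ∞) (psi p q r) := psi_contDiff hp hq hr
  -- the two correction terms
  set α : V → ℝ := fun w => psi p q r (pr 3 w) with hαdef
  set β : V → ℝ := fun w => psi p q r (pr 2 w) - psi p q r (pr 2 (pr 3 w)) with hβdef
  have hα : ContDiff ℝ (⊤:ℕ∞) α := hψ.comp (pr 3).contDiff
  have hβ : ContDiff ℝ (⊤:ℕ∞) β :=
    (hψ.comp (pr 2).contDiff).sub (hψ.comp ((pr 2).comp (pr 3)).contDiff)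
  have hα3 : ∀ w, pd 3 α w = 0 := by
    intro w
    have e : pd 3 α w = fderiv ℝ (psi p q r) (pr 3 w) (pr 3 (Pi.single 3 1)) :=
      pd_comp_clm (pr 3) (diffAt hψ _) 3
    rw [e, show pr 3 (Pi.single 3 1) = 0 from pr_ee_self 3, map_zero]
  have hβ2 : ∀ w, pd 2 β w = 0 := by
    intro w
    have d1 : DifferentiableAt ℝ (fun w => psi p q r (pr 2 w)) w :=
      diffAt (hψ.comp (pr 2).contDiff) w
    have d2 : DifferentiableAt ℝ (fun w => psi p q r (pr 2 (pr 3 w))) w :=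
      diffAt (hψ.comp ((pr 2).comp (pr 3)).contDiff) w
    have e0 : pd 2 β w = pd 2 (fun w => psi p q r (pr 2 w)) w
        - pd 2 (fun w => psi p q r (pr 2 (pr 3 w))) w := pd_sub d1 d2 2
    have e1 : pd 2 (fun w => psi p q r (pr 2 w)) w
        = fderiv ℝ (psi p q r) (pr 2 w) (pr 2 (Pi.single 2 1)) :=
      pd_comp_clm (pr 2) (diffAt hψ _) 2
    have e2 : pd 2 (fun w => psi p q r (pr 2 (pr 3 w))) w
        = fderiv ℝ (psi p q r) (pr 2 (pr 3 w)) (pr 2 (pr 3 (Pi.single 2 1))) :=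
      pd_comp_clm ((pr 2).comp (pr 3)) (diffAt hψ _) 2
    rw [e0, e1, e2, show pr 2 (Pi.single 2 1) = 0 from pr_ee_self 2,
      show pr 3 (Pi.single 2 1) = Pi.single 2 1 from pr_ee_ne h23,
      show pr 2 (Pi.single 2 1) = 0 from pr_ee_self 2]
    simp
  refine ⟨fun v => P 3 p v + P 2 α v, fun v => P 2 r v + P 3 β v,
    (contDiff_P_top 3 hp).add (contDiff_P_top 2 hα),
    (contDiff_P_top 2 hr).add (contDiff_P_top 3 hβ), fun v => ?_⟩
  have dP3p := diffAt (contDiff_P_top 3 hp)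
  have dP2α := diffAt (contDiff_P_top 2 hα)
  have dP2r := diffAt (contDiff_P_top 2 hr)
  have dP3β := diffAt (contDiff_P_top 3 hβ)
  have eF3 : pd 3 (fun v => P 3 p v + P 2 α v) v = p v := by
    rw [pd_add (dP3p v) (dP2α v) 3, pd_P_self hp 3 v, pd_P_ne hα h32 v,
      show pd 3 α = fun _ => (0:ℝ) from funext hα3, P_zero, add_zero]
  have eG2 : pd 2 (fun v => P 2 r v + P 3 β v) v = r v := by
    rw [pd_add (dP2r v) (dP3β v) 2, pd_P_self hr 2 v, pd_P_ne hβ h23 v,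
      show pd 2 β = fun _ => (0:ℝ) from funext hβ2, P_zero, add_zero]
  have eF2 : pd 2 (fun v => P 3 p v + P 2 α v) v = P 3 (pd 2 p) v + α v := by
    rw [pd_add (dP3p v) (dP2α v) 2, pd_P_ne hp h23 v, pd_P_self hα 2 v]
  have eG3 : pd 3 (fun v => P 2 r v + P 3 β v) v = P 2 (pd 3 r) v + β v := by
    rw [pd_add (dP2r v) (dP3β v) 3, pd_P_ne hr h32 v, pd_P_self hβ 3 v]
  have hsum : pd 2 (fun v => P 3 p v + P 2 α v) v
      + pd 3 (fun v => P 2 r v + P 3 β v) v = -(2 * q v) := by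
    rw [eF2, eG3]
    have hd := psi_decomp hp hq hr h v
    have hpsi : psi p q r v = -(2 * q v) - P 3 (pd 2 p) v - P 2 (pd 3 r) v := rfl
    have hαv : α v = psi p q r (pr 3 v) := rfl
    have hβv : β v = psi p q r (pr 2 v) - psi p q r (pr 2 (pr 3 v)) := rfl
    rw [hαv, hβv] at *
    linarith
  exact ⟨eF3.symm, by rw [hsum]; ring, eG2.symm⟩
end
end
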